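/- For 1 ≤ k ≤ ⌊L/2⌋, the number of k-element subsets of ZMod L with no two cyclically adjacent elements equals (L/(L−k)) · binomial(L−k, k), which equals (L/k) · binomial(L−k−1, k−1). -/

import Mathlib

def pathSets (n j : ℕ) : Finset (Finset ℕ) :=
  ((Finset.range n).powersetCard j).filter (fun S => ∀ a ∈ S, a + 1 ∉ S)

lemma mem_pathSets {n j : ℕ} {S : Finset ℕ} :
    S ∈ pathSets n j ↔ S ⊆ Finset.range n ∧ S.card = j ∧ ∀ a ∈ S, a + 1 ∉ S := by
  simp only [pathSets, Finset.mem_filter, Finset.mem_powersetCard]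
  tauto

lemma pathSets_zero_card (n : ℕ) : (pathSets n 0).card = 1 := by
  have h : pathSets n 0 = {∅} := by
    ext S
    simp only [mem_pathSets, Finset.card_eq_zero, Finset.mem_singleton]
    constructor
    · exact fun h => h.2.1
    · rintro rfl; simp
  simp [h]

lemma pathSets_rec (n j : ℕ) :
    (pathSets (n+2) (j+1)).card = (pathSets (n+1) (j+1)).card + (pathSets n j).card := by
  classical
  have hsplit := Finset.card_filter_add_card_filter_not
    (s := pathSets (n+2) (j+1)) (fun S => (n+1) ∈ S)
  have e1 : (pathSets (n+2) (j+1)).filter (fun S => ¬ (n+1) ∈ S) = pathSets (n+1) (j+1) := by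
    ext S
    simp only [Finset.mem_filter, mem_pathSets]
    constructor
    · rintro ⟨⟨hsub, hcard, hnc⟩, hmem⟩
      refine ⟨fun a ha => ?_, hcard, hnc⟩
      have h1 := hsub ha
      simp only [Finset.mem_range] at h1 ⊢
      have h2 : a ≠ n + 1 := fun h => hmem (h ▸ ha)
      omega
    · rintro ⟨hsub, hcard, hnc⟩
      refine ⟨⟨fun a ha => ?_, hcard, hnc⟩, fun h => ?_⟩
      · have h1 := hsub ha; simp only [Finset.mem_range] at h1 ⊢; omega
      · have h1 := hsub h; simp only [Finset.mem_range] at h1; omega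
  have e2 : ((pathSets (n+2) (j+1)).filter (fun S => (n+1) ∈ S)).card = (pathSets n j).card := by
    refine Finset.card_nbij' (fun S => S.erase (n+1)) (fun T => insert (n+1) T) ?_ ?_ ?_ ?_
    · intro S hS
      simp only [Finset.mem_coe, Finset.mem_filter, mem_pathSets] at hS
      obtain ⟨⟨hsub, hcard, hnc⟩, hmem⟩ := hS
      rw [Finset.mem_coe, mem_pathSets]
      refine ⟨fun a ha => ?_, ?_, fun a ha hc => ?_⟩
      · rw [Finset.mem_erase] at ha
        have h1 := hsub ha.2
        simp only [Finset.mem_range] at h1 ⊢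
        rcases Nat.lt_or_ge a n with h | h
        · exact h
        · exfalso
          have h2 : a = n ∨ a = n + 1 := by omega
          rcases h2 with rfl | rfl
          · exact hnc a ha.2 hmem
          · exact ha.1 rfl
      · rw [Finset.card_erase_of_mem hmem, hcard]; rfl
      · rw [Finset.mem_erase] at ha
        exact hnc a ha.2 (Finset.mem_of_mem_erase hc)
    · intro T hT
      rw [Finset.mem_coe, mem_pathSets] at hT
      obtain ⟨hsub, hcard, hnc⟩ := hT
      have hnotin : n + 1 ∉ T := fun h => by
        have h1 := hsub h; simp only [Finset.mem_range] at h1; omega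
      simp only [Finset.mem_coe, Finset.mem_filter, mem_pathSets]
      refine ⟨⟨fun a ha => ?_, ?_, fun a ha hc => ?_⟩, Finset.mem_insert_self _ _⟩
      · rw [Finset.mem_insert] at ha
        simp only [Finset.mem_range]
        rcases ha with rfl | ha
        · omega
        · have h1 := hsub ha; simp only [Finset.mem_range] at h1; omega
      · rw [Finset.card_insert_of_notMem hnotin, hcard]
      · rw [Finset.mem_insert] at ha hc
        rcases ha with rfl | ha
        · rcases hc with hc | hc
          · omega
          · have h1 := hsub hc; simp only [Finset.mem_range] at h1; omega
        · rcases hc with hc | hc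
          · have h1 := hsub ha; simp only [Finset.mem_range] at h1; omega
          · exact hnc a ha hc
    · intro S hS
      simp only [Finset.mem_coe, Finset.mem_filter] at hS
      exact Finset.insert_erase hS.2
    · intro T hT
      rw [Finset.mem_coe, mem_pathSets] at hT
      exact Finset.erase_insert (fun h => by
        have h1 := hT.1 h; simp only [Finset.mem_range] at h1; omega)
  rw [e1] at hsplit
  omega

lemma pathSets_card (n j : ℕ) : (pathSets n j).card = Nat.choose (n + 1 - j) j := by
  induction n using Nat.strong_induction_on generalizing j with
  | _ n ih =>
    match n, j with
    | n, 0 => simp [pathSets_zero_card]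
    | 0, (j+1) =>
      have he : pathSets 0 (j+1) = ∅ := by
        ext S
        simp only [mem_pathSets, Finset.range_zero, Finset.subset_empty, Finset.notMem_empty,
          iff_false, not_and]
        rintro rfl h
        simp at h
      rw [he]
      simp
    | 1, 1 =>
      have he : pathSets 1 1 = {{0}} := by
        ext S
        simp only [mem_pathSets, Finset.range_one, Finset.mem_singleton]
        constructor
        · rintro ⟨hsub, hcard, -⟩
          rcases Finset.subset_singleton_iff.mp hsub with rfl | rfl
          · simp at hcard
          · rfl
        · rintro rfl
          refine ⟨by simp, by simp, ?_⟩
          intro a ha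
          simp only [Finset.mem_singleton] at ha ⊢
          omega
      rw [he]; simp
    | 1, (j+2) =>
      have he : pathSets 1 (j+2) = ∅ := by
        ext S
        simp only [mem_pathSets, Finset.range_one, Finset.notMem_empty, iff_false, not_and]
        intro hsub hcard _
        have h1 := Finset.card_le_card hsub
        simp only [Finset.card_singleton] at h1
        omega
      rw [he]
      have h2 : 1 + 1 - (j + 2) = 0 := by omega
      simp [h2]
    | (n+2), (j+1) =>
      rw [pathSets_rec, ih (n+1) (by omega), ih n (by omega)]
      rcases le_or_gt j (n+1) with h | h
      · have h1 : (n+1) + 1 - (j+1) = n + 1 - j := by omega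
        have h2 : (n+2) + 1 - (j+1) = (n + 1 - j) + 1 := by omega
        rw [h1, h2, Nat.choose_succ_succ', Nat.add_comm]
      · have h1 : (n+1) + 1 - (j+1) = 0 := by omega
        have h2 : n + 1 - j = 0 := by omega
        rw [h1, h2]
        have h3 : (n+2) + 1 - (j+1) ≤ 1 := by omega
        have hj2 : 2 ≤ j := by omega
        interval_cases h4 : ((n+2) + 1 - (j+1)) <;>
          simp [Nat.choose_eq_zero_of_lt (by omega : 0 < j), Nat.choose_eq_zero_of_lt (by omega : 0 < j+1)] <;>
          omega


/-- The number of `k`-element hard-core subsets of the cycle `ZMod L` is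
`(L/(L-k))·C(L-k,k) = (L/k)·C(L-k-1,k-1)`. -/
theorem hardcore_fixed_number_count (L k : ℕ) [NeZero L] (hL : 2 ≤ L)
    (hk1 : 1 ≤ k) (hk2 : k ≤ L / 2) :
    ((Fintype.card {S : Finset (ZMod L) // (∀ r ∈ S, r + 1 ∉ S) ∧ S.card = k}) : ℚ) =
        ((L : ℚ) / ((L : ℚ) - (k : ℚ))) * (Nat.choose (L - k) k : ℚ) ∧
      ((L : ℚ) / ((L : ℚ) - (k : ℚ))) * (Nat.choose (L - k) k : ℚ) =
        ((L : ℚ) / (k : ℚ)) * (Nat.choose (L - k - 1) (k - 1) : ℚ) := by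
  classical
  have h2k : 2 * k ≤ L := by omega
  have hkL : k < L := by omega
  -- cast injectivity helper
  have hcastinj : ∀ a b : ℕ, a < L → b < L → (a : ZMod L) = (b : ZMod L) → a = b := by
    intro a b ha hb h
    have := congrArg ZMod.val h
    rwa [ZMod.val_cast_of_lt ha, ZMod.val_cast_of_lt hb] at this
  have hvalcast : ∀ a : ZMod L, ((a.val : ℕ) : ZMod L) = a := fun a =>
    (ZMod.natCast_val a).trans (ZMod.cast_id _ _)
  set N : Finset (Finset (ZMod L)) :=
    Finset.univ.filter (fun S => (∀ r ∈ S, r + 1 ∉ S) ∧ S.card = k) with hN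
  have hcard_sub :
      Fintype.card {S : Finset (ZMod L) // (∀ r ∈ S, r + 1 ∉ S) ∧ S.card = k} = N.card := by
    rw [hN]
    exact (Fintype.card_subtype _)
  -- the fiber count
  have key : ∀ r : ZMod L,
      (N.filter (fun S => r ∈ S)).card = Nat.choose (L - k - 1) (k - 1) := by
    intro r
    have hbij : (pathSets (L-3) (k-1)).card = (N.filter (fun S => r ∈ S)).card := by
      refine Finset.card_nbij'
        (fun T => insert r (T.image (fun i : ℕ => r + 2 + (i : ZMod L))))
        (fun S => (S.erase r).image (fun s => (s - (r + 2)).val)) ?_ ?_ ?_ ?_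
      · -- forward maps into the fiber
        intro T hT
        rw [Finset.mem_coe, mem_pathSets] at hT
        obtain ⟨hsub, hcard, hnc⟩ := hT
        have hbd : ∀ i ∈ T, i < L - 3 := fun i hi => by
          have := hsub hi; simpa [Finset.mem_range] using this
        have hrnot : r ∉ T.image (fun i : ℕ => r + 2 + (i : ZMod L)) := by
          simp only [Finset.mem_image, not_exists]
          rintro i ⟨hi, hceq⟩
          have hkey : ((i + 2 : ℕ) : ZMod L) = ((0 : ℕ) : ZMod L) := by
            push_cast
            linear_combination hceq
          have := hcastinj _ _ (by have := hbd i hi; omega) (by omega) hkey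
          omega
        simp only [Finset.mem_coe, Finset.mem_filter, hN, Finset.mem_univ, true_and]
        refine ⟨⟨?_, ?_⟩, Finset.mem_insert_self _ _⟩
        · -- hardcore
          intro a ha hc
          rw [Finset.mem_insert] at ha hc
          rcases ha with rfl | ha
          · rcases hc with hc | hc
            · -- r + 1 = r
              have hkey : ((1 : ℕ) : ZMod L) = ((0 : ℕ) : ZMod L) := by
                push_cast
                linear_combination hc
              have := hcastinj _ _ (by omega) (by omega) hkey
              omega
            · simp only [Finset.mem_image] at hc
              obtain ⟨i, hi, hieq⟩ := hc
              have hkey : ((i + 1 : ℕ) : ZMod L) = ((0 : ℕ) : ZMod L) := by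
                push_cast
                linear_combination hieq
              have := hcastinj _ _ (by have := hbd i hi; omega) (by omega) hkey
              omega
          · simp only [Finset.mem_image] at ha
            obtain ⟨i, hi, rfl⟩ := ha
            rcases hc with hc | hc
            · -- r+2+i+1 = r
              have hkey : ((i + 3 : ℕ) : ZMod L) = ((0 : ℕ) : ZMod L) := by
                push_cast
                linear_combination hc
              have := hcastinj _ _ (by have := hbd i hi; omega) (by omega) hkey
              omega
            · simp only [Finset.mem_image] at hc
              obtain ⟨i', hi', hieq⟩ := hc
              have hkey : ((i + 1 : ℕ) : ZMod L) = ((i' : ℕ) : ZMod L) := by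
                push_cast
                linear_combination - hieq
              have := hcastinj _ _ (by have := hbd i hi; omega) (by have := hbd i' hi'; omega) hkey
              exact hnc i hi (this ▸ hi')
        · -- cardinality
          rw [Finset.card_insert_of_notMem hrnot,
            Finset.card_image_of_injOn, hcard]
          · omega
          · intro i hi i' hi' hieq
            simp only [Finset.mem_coe] at hi hi'
            have hkey : ((i : ℕ) : ZMod L) = ((i' : ℕ) : ZMod L) := by
              linear_combination hieq
            exact hcastinj _ _ (by have := hbd i hi; omega) (by have := hbd i' hi'; omega) hkey
      · -- backward maps into pathSets
        intro S hS
        simp only [Finset.mem_coe, Finset.mem_filter, hN, Finset.mem_univ, true_and] at hS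
        obtain ⟨⟨hnc, hcard⟩, hrS⟩ := hS
        -- basic facts about elements of S.erase r
        have hgood : ∀ s ∈ S.erase r, (s - (r + 2)).val < L - 3 := by
          intro s hs
          rw [Finset.mem_erase] at hs
          obtain ⟨hsr, hsS⟩ := hs
          set u := (s - r).val with hu
          have huL : u < L := ZMod.val_lt _
          have hue : ((u : ℕ) : ZMod L) = s - r := hvalcast _
          have hu0 : u ≠ 0 := by
            intro h
            rw [h] at hue
            simp only [Nat.cast_zero] at hue
            exact hsr (by linear_combination - hue)
          have hu1 : u ≠ 1 := by
            intro h
            rw [h] at hue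
            have : s = r + 1 := by push_cast at hue; linear_combination - hue
            exact hnc r hrS (this ▸ hsS)
          have huL1 : u ≠ L - 1 := by
            intro h
            have hL0 : ((L : ℕ) : ZMod L) = 0 := ZMod.natCast_self L
            rw [h] at hue
            rw [Nat.cast_sub (by omega : 1 ≤ L)] at hue
            have : s + 1 = r := by push_cast at hue; linear_combination hL0 - hue
            exact hnc s hsS (this ▸ hrS)
          have hu2 : 2 ≤ u ∧ u ≤ L - 2 := by omega
          have hval : (s - (r + 2)).val = u - 2 := by
            have he : s - (r + 2) = ((u - 2 : ℕ) : ZMod L) := by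
              rw [Nat.cast_sub (by omega : 2 ≤ u)]
              push_cast
              linear_combination - hue
            rw [he, ZMod.val_cast_of_lt (by omega)]
          rw [hval]
          omega
        rw [Finset.mem_coe, mem_pathSets]
        refine ⟨?_, ?_, ?_⟩
        · intro a ha
          simp only [Finset.mem_image] at ha
          obtain ⟨s, hs, rfl⟩ := ha
          simp only [Finset.mem_range]
          exact hgood s hs
        · rw [Finset.card_image_of_injOn, Finset.card_erase_of_mem hrS, hcard]
          intro s hs s' hs' heq
          have h1 : s - (r + 2) = s' - (r + 2) := by
            rw [← hvalcast (s - (r + 2)), ← hvalcast (s' - (r + 2))]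
            exact congrArg _ heq
          linear_combination h1
        · intro a ha hc
          simp only [Finset.mem_image] at ha hc
          obtain ⟨s, hs, hseq⟩ := ha
          obtain ⟨s', hs', hseq'⟩ := hc
          have hse : s = r + 2 + ((a : ℕ) : ZMod L) := by
            rw [← hseq, hvalcast]
            ring
          have hse' : s' = r + 2 + ((a + 1 : ℕ) : ZMod L) := by
            rw [← hseq', hvalcast]
            ring
          have : s' = s + 1 := by
            rw [hse, hse']
            push_cast
            ring
          rw [Finset.mem_erase] at hs hs'
          exact hnc s hs.2 (this ▸ hs'.2)
      · -- left inverse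
        intro T hT
        rw [Finset.mem_coe, mem_pathSets] at hT
        obtain ⟨hsub, hcard, hnc⟩ := hT
        have hbd : ∀ i ∈ T, i < L - 3 := fun i hi => by
          have := hsub hi; simpa [Finset.mem_range] using this
        have hrnot : r ∉ T.image (fun i : ℕ => r + 2 + (i : ZMod L)) := by
          simp only [Finset.mem_image, not_exists]
          rintro i ⟨hi, hceq⟩
          have hkey : ((i + 2 : ℕ) : ZMod L) = ((0 : ℕ) : ZMod L) := by
            push_cast
            linear_combination hceq
          have := hcastinj _ _ (by have := hbd i hi; omega) (by omega) hkey
          omega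
        beta_reduce
        rw [Finset.erase_insert hrnot, Finset.image_image]
        rw [show ((fun s : ZMod L => (s - (r + 2)).val) ∘ (fun i : ℕ => r + 2 + (i : ZMod L)))
            = fun i : ℕ => ((i : ZMod L)).val from by funext i; simp [add_sub_cancel_left]]
        refine Finset.image_congr (fun i hi => ?_) |>.trans (Finset.image_id)
        simp only [Finset.mem_coe] at hi
        exact ZMod.val_cast_of_lt (by have := hbd i hi; omega)
      · -- right inverse
        intro S hS
        simp only [Finset.mem_coe, Finset.mem_filter, hN, Finset.mem_univ, true_and] at hS
        obtain ⟨⟨hnc, hcard⟩, hrS⟩ := hS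
        beta_reduce
        rw [Finset.image_image]
        have himg : (S.erase r).image
            ((fun i : ℕ => r + 2 + (i : ZMod L)) ∘ (fun s : ZMod L => (s - (r + 2)).val))
            = S.erase r := by
          refine Finset.image_congr (fun s hs => ?_) |>.trans (Finset.image_id)
          simp only [Function.comp_apply, id_eq]
          rw [hvalcast]
          ring
        rw [himg, Finset.insert_erase hrS]
    rw [← hbij, pathSets_card]
    rcases Nat.lt_or_ge k 2 with hk | hk
    · have hk1' : k = 1 := by omega
      subst hk1'
      simp
    · have hL4 : 4 ≤ L := by omega
      congr 1
      omega
  -- double counting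
  have hdc : N.card * k = L * Nat.choose (L - k - 1) (k - 1) := by
    have h1 : ∑ S ∈ N, S.card = N.card * k := by
      rw [Finset.sum_congr rfl (fun S hS => ((Finset.mem_filter.mp hS).2).2),
        Finset.sum_const, smul_eq_mul]
    have h2 : ∑ S ∈ N, S.card = ∑ r : ZMod L, (N.filter (fun S => r ∈ S)).card := by
      have hS : ∀ S : Finset (ZMod L), S.card = ∑ r : ZMod L, if r ∈ S then 1 else 0 := by
        intro S
        rw [← Finset.card_filter, Finset.filter_univ_mem]
      calc ∑ S ∈ N, S.card = ∑ S ∈ N, ∑ r : ZMod L, if r ∈ S then 1 else 0 :=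
              Finset.sum_congr rfl (fun S _ => hS S)
        _ = ∑ r : ZMod L, ∑ S ∈ N, if r ∈ S then 1 else 0 := Finset.sum_comm
        _ = ∑ r : ZMod L, (N.filter (fun S => r ∈ S)).card :=
              Finset.sum_congr rfl (fun r _ => (Finset.card_filter _ _).symm)
    rw [← h1, h2, Finset.sum_congr rfl (fun r _ => key r), Finset.sum_const,
      Finset.card_univ, ZMod.card, smul_eq_mul]
  -- the binomial identity in ℕ
  have hnat : (L - k) * Nat.choose (L - k - 1) (k - 1) = Nat.choose (L - k) k * k := by
    have := Nat.add_one_mul_choose_eq (L - k - 1) (k - 1)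
    have e1 : L - k - 1 + 1 = L - k := by omega
    have e2 : k - 1 + 1 = k := by omega
    rwa [e1, e2] at this
  -- pass to ℚ
  have hk0 : (k : ℚ) ≠ 0 := Nat.cast_ne_zero.mpr (by omega)
  have hcastLk : ((L - k : ℕ) : ℚ) = (L : ℚ) - (k : ℚ) := by
    push_cast [Nat.cast_sub hkL.le]
    ring
  have hLk0 : (L : ℚ) - (k : ℚ) ≠ 0 := by
    rw [← hcastLk]
    exact Nat.cast_ne_zero.mpr (by omega)
  have hq1 : (N.card : ℚ) * k = L * (Nat.choose (L - k - 1) (k - 1) : ℚ) := by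
    exact_mod_cast hdc
  have hq2 : ((L : ℚ) - k) * (Nat.choose (L - k - 1) (k - 1) : ℚ)
      = (Nat.choose (L - k) k : ℚ) * k := by
    have h := congrArg (Nat.cast : ℕ → ℚ) hnat
    push_cast [Nat.cast_sub hkL.le] at h
    exact h
  constructor
  · rw [hcard_sub]
    rw [div_mul_eq_mul_div, eq_div_iff hLk0]
    apply mul_right_cancel₀ hk0
    linear_combination ((L : ℚ) - k) * hq1 + (L : ℚ) * hq2
  · rw [div_mul_eq_mul_div, div_mul_eq_mul_div, div_eq_div_iff hLk0 hk0]
    linear_combination (- (L : ℚ)) * hq2
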